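/- For all integers N ≥ 2 and M ≥ 1 and every list (a_1,…,a_{N−1}) of integers with 1 ≤ a_i ≤ M for all i, there exists a plane forest with exactly N leaves and height at most M whose separation array equals (a_1,…,a_{N−1}). (This is Theorem 1(2): every array of the given form is the representation of some hierarchical organization instance.) -/

import Mathlib

/-- A rooted plane tree: a node carrying a finite ordered list of child subtrees.
A node with no children is a leaf. -/
inductive PTree : Type where
  | node : List PTree → PTree

namespace PTree

mutual
/-- Number of leaves of a plane tree. -/
def leaves : PTree → ℕ
  | .node [] => 1
  | .node (c :: cs) => c.leaves + leavesList cs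

/-- Total number of leaves of a list of plane trees. -/
def leavesList : List PTree → ℕ
  | [] => 0
  | c :: cs => c.leaves + leavesList cs
end

mutual
/-- Height of a plane tree (a single leaf has height 1). -/
def height : PTree → ℕ
  | .node [] => 1
  | .node (c :: cs) => 1 + max c.height (heightList cs)

/-- Maximum height among a list of plane trees (0 for the empty list). -/
def heightList : List PTree → ℕ
  | [] => 0
  | c :: cs => max c.height (heightList cs)
end

mutual
/-- Separation levels between consecutive leaves inside a tree whose root is at level `l`:
between two consecutive leaves lying in distinct children we record `l+1`
(one more than the level of their lowest common ancestor, which is the root). -/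
def enc : PTree → ℕ → List ℕ
  | .node [], _ => []
  | .node (c :: cs), l => c.enc (l + 1) ++ encList cs (l + 1)

/-- Separation levels for a list of sibling subtrees all at level `l`, including
the separator `l` between consecutive subtrees. -/
def encList : List PTree → ℕ → List ℕ
  | [], _ => []
  | c :: cs, l => (l :: c.enc l) ++ encList cs l
end

end PTree

/-- Total number of leaves of a plane forest. -/
def forestLeaves (F : List PTree) : ℕ := PTree.leavesList F

/-- Height of a plane forest: the maximum level of any of its nodes (roots are at level 1). -/
def forestHeight (F : List PTree) : ℕ := PTree.heightList F

/-- The separation array of a plane forest: for each pair of consecutive leaves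
(numbered left to right), the level at which they separate (`1` if they lie in
different trees, and `1 +` the level of their lowest common ancestor otherwise). -/
def forestSep : List PTree → List ℕ
  | [] => []
  | t :: ts => t.enc 1 ++ PTree.encList ts 1

namespace PTree

/-- Wrap a tree in `d` unary nodes. -/
def chain : ℕ → PTree → PTree
  | 0, t => t
  | d + 1, t => .node [chain d t]

mutual
/-- Add a new rightmost leaf whose separation level from the previous last
leaf is `l + d + 1` (where `l` is the level of `t`). -/
def addLeaf : PTree → ℕ → PTree
  | .node [], d => chain d (.node [.node [], .node []])
  | .node (c :: cs), 0 => .node (c :: (cs ++ [.node []]))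
  | .node (c :: cs), d + 1 => .node (addLast (c :: cs) d)

/-- Apply `addLeaf · d` to the last element of a list. -/
def addLast : List PTree → ℕ → List PTree
  | [], _ => []
  | [c], d => [addLeaf c d]
  | c :: c' :: cs, d => c :: addLast (c' :: cs) d
end

theorem encList_append (xs ys : List PTree) (l : ℕ) :
    encList (xs ++ ys) l = encList xs l ++ encList ys l := by
  induction xs with
  | nil => simp [encList]
  | cons c cs ih => simp [encList, ih]

theorem leavesList_append (xs ys : List PTree) :
    leavesList (xs ++ ys) = leavesList xs + leavesList ys := by
  induction xs with
  | nil => simp [leavesList]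
  | cons c cs ih => simp [leavesList, ih]; omega

theorem heightList_append (xs ys : List PTree) :
    heightList (xs ++ ys) = max (heightList xs) (heightList ys) := by
  induction xs with
  | nil => simp [heightList]
  | cons c cs ih => simp [heightList, ih]

theorem enc_chain (d : ℕ) (t : PTree) (l : ℕ) :
    (chain d t).enc l = t.enc (l + d) := by
  induction d generalizing l with
  | zero => simp [chain]
  | succ d ih => simp [chain, enc, encList, ih]; ring_nf

theorem leaves_chain (d : ℕ) (t : PTree) :
    (chain d t).leaves = t.leaves := by
  induction d with
  | zero => simp [chain]
  | succ d ih => simp [chain, leaves, leavesList, ih]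

theorem height_chain (d : ℕ) (t : PTree) :
    (chain d t).height = d + t.height := by
  induction d with
  | zero => simp [chain]
  | succ d ih => simp [chain, height, heightList, ih]; omega

mutual
theorem enc_addLeaf (t : PTree) (d l : ℕ) :
    (addLeaf t d).enc l = t.enc l ++ [l + d + 1] := by
  match t, d with
  | .node [], d =>
      simp [addLeaf, enc_chain, enc, encList]
  | .node (c :: cs), 0 =>
      simp [addLeaf, enc, encList_append, encList]
  | .node [c], d + 1 =>
      have := enc_addLeaf c d (l + 1)
      simp [addLeaf, addLast, enc, encList, this]
      omega
  | .node (c :: c' :: cs), d + 1 =>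
      have := encList_addLast (c' :: cs) d (l + 1) (by simp)
      simp [addLeaf, addLast, enc, this]
      omega

theorem encList_addLast (cs : List PTree) (d l : ℕ) (h : cs ≠ []) :
    encList (addLast cs d) l = encList cs l ++ [l + d + 1] := by
  match cs with
  | [c] =>
      have := enc_addLeaf c d l
      simp [addLast, encList, this]
  | c :: c' :: cs =>
      have := encList_addLast (c' :: cs) d l (by simp)
      simp [addLast, encList, this]
end

mutual
theorem leaves_addLeaf (t : PTree) (d : ℕ) :
    (addLeaf t d).leaves = t.leaves + 1 := by
  match t, d with
  | .node [], d =>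
      simp [addLeaf, leaves_chain, leaves, leavesList]
  | .node (c :: cs), 0 =>
      simp [addLeaf, leaves, leavesList_append, leavesList]
      omega
  | .node [c], d + 1 =>
      have := leaves_addLeaf c d
      simp [addLeaf, addLast, leaves, leavesList, this]
  | .node (c :: c' :: cs), d + 1 =>
      have := leavesList_addLast (c' :: cs) d (by simp)
      simp [addLeaf, addLast, leaves, leavesList, this]
      omega

theorem leavesList_addLast (cs : List PTree) (d : ℕ) (h : cs ≠ []) :
    leavesList (addLast cs d) = leavesList cs + 1 := by
  match cs with
  | [c] =>
      have := leaves_addLeaf c d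
      simp [addLast, leavesList, this]
  | c :: c' :: cs =>
      have := leavesList_addLast (c' :: cs) d (by simp)
      simp [addLast, leavesList, this]
      omega
end

mutual
theorem height_addLeaf (t : PTree) (d : ℕ) :
    (addLeaf t d).height ≤ max t.height (d + 2) := by
  match t, d with
  | .node [], d =>
      simp [addLeaf, height_chain, height, heightList]
  | .node (c :: cs), 0 =>
      simp [addLeaf, height, heightList_append, heightList]
      omega
  | .node [c], d + 1 =>
      have := height_addLeaf c d
      simp [addLeaf, addLast, height, heightList]
      omega
  | .node (c :: c' :: cs), d + 1 =>
      have := heightList_addLast (c' :: cs) d (by simp)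
      simp [addLeaf, addLast, height, heightList] at this ⊢
      omega

theorem heightList_addLast (cs : List PTree) (d : ℕ) (h : cs ≠ []) :
    heightList (addLast cs d) ≤ max (heightList cs) (d + 2) := by
  match cs with
  | [c] =>
      have := height_addLeaf c d
      simp [addLast, heightList] at this ⊢
      omega
  | c :: c' :: cs =>
      have := heightList_addLast (c' :: cs) d (by simp)
      simp [addLast, heightList] at this ⊢
      omega
end

theorem addLast_ne_nil (cs : List PTree) (d : ℕ) (h : cs ≠ []) :
    addLast cs d ≠ [] := by
  match cs with
  | [c] => simp [addLast]
  | c :: c' :: cs => simp [addLast]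

end PTree

theorem forestSep_addLast (t : PTree) (ts : List PTree) (d : ℕ) :
    forestSep (PTree.addLast (t :: ts) d) = forestSep (t :: ts) ++ [d + 2] := by
  match ts with
  | [] =>
      have := PTree.enc_addLeaf t d 1
      simp [PTree.addLast, forestSep, PTree.encList, this]
      omega
  | t' :: ts' =>
      have := PTree.encList_addLast (t' :: ts') d 1 (by simp)
      simp [PTree.addLast, forestSep, this]
      omega

theorem aux_exists (M : ℕ) (hM : 1 ≤ M) (a : List ℕ)
    (ha : ∀ x ∈ a, 1 ≤ x ∧ x ≤ M) :
    ∃ F : List PTree, F ≠ [] ∧ forestLeaves F = a.length + 1 ∧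
      forestHeight F ≤ M ∧ forestSep F = a := by
  induction a using List.reverseRecOn with
  | nil =>
      refine ⟨[.node []], by simp, ?_, ?_, ?_⟩
      · simp [forestLeaves, PTree.leavesList, PTree.leaves]
      · simpa [forestHeight, PTree.heightList, PTree.height] using hM
      · simp [forestSep, PTree.enc, PTree.encList]
  | append_singleton b k ih =>
      obtain ⟨F, hF, hleaves, hheight, hsep⟩ := ih (fun x hx => ha x (by simp [hx]))
      obtain ⟨hk1, hkM⟩ := ha k (by simp)
      obtain ⟨t, ts, rfl⟩ := List.exists_cons_of_ne_nil hF
      rcases Nat.lt_or_ge k 2 with hk | hk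
      · -- k = 1 : new singleton tree
        have hk' : k = 1 := by omega
        refine ⟨t :: (ts ++ [.node []]), by simp, ?_, ?_, ?_⟩
        · show PTree.leavesList _ = _
          simp only [PTree.leavesList, PTree.leavesList_append]
          simp only [forestLeaves, PTree.leavesList] at hleaves
          simp [PTree.leavesList, PTree.leaves]
          omega
        · show PTree.heightList _ ≤ _
          simp only [PTree.heightList, PTree.heightList_append]
          simp only [forestHeight, PTree.heightList] at hheight
          simp [PTree.heightList, PTree.height]
          omega
        · show t.enc 1 ++ PTree.encList (ts ++ [.node []]) 1 = b ++ [k]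
          rw [PTree.encList_append, ← List.append_assoc]
          simp only [forestSep] at hsep
          rw [hsep]
          simp [PTree.encList, PTree.enc, hk']
      · -- k ≥ 2 : graft onto last tree
        refine ⟨PTree.addLast (t :: ts) (k - 2), PTree.addLast_ne_nil _ _ (by simp), ?_, ?_, ?_⟩
        · have := PTree.leavesList_addLast (t :: ts) (k - 2) (by simp)
          simp only [forestLeaves] at hleaves ⊢
          simp [this, hleaves]
        · have := PTree.heightList_addLast (t :: ts) (k - 2) (by simp)
          simp only [forestHeight] at hheight ⊢
          omega
        · have := forestSep_addLast t ts (k - 2)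
          rw [this, hsep]
          congr 2
          omega

/-- Theorem 1(2).
For all integers `N ≥ 2` and `M ≥ 1` and every list `(a_1,…,a_{N-1})` of integers with
`1 ≤ a_i ≤ M` for all `i`, there exists a plane forest with exactly `N` leaves and height
at most `M` whose separation array equals `(a_1,…,a_{N-1})`. -/
theorem exists_forest_of_sepArray (N M : ℕ) (hN : 2 ≤ N) (hM : 1 ≤ M)
    (a : List ℕ) (hlen : a.length = N - 1) (ha : ∀ x ∈ a, 1 ≤ x ∧ x ≤ M) :
    ∃ F : List PTree, F ≠ [] ∧ forestLeaves F = N ∧ forestHeight F ≤ M ∧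
      forestSep F = a := by
  obtain ⟨F, h1, h2, h3, h4⟩ := aux_exists M hM a ha
  exact ⟨F, h1, by omega, h3, h4⟩
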